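/- Let f : B → B' and g : A' → B' be homomorphisms of commutative rings and A := B ×_{B'} A' the fiber product ring. Let a = (b, a') ∈ A and let b' := f(b) = g(a') ∈ B'. Then the natural ring homomorphism from the localization A_a of A away from a to the fiber product ring B_b ×_{B'_{b'}} A'_{a'} of the localizations away from b, b', a' (with respect to the induced maps B_b → B'_{b'} and A'_{a'} → B'_{b'}) is an isomorphism. -/

import Mathlib

/-- The fiber product ring `B ×_{B'} A'` of two ring homomorphisms `f : B →+* B'` and
`g : A' →+* B'`, realized as the subring `{(b, a') | f b = g a'}` of `B × A'`. -/
def fiberProd {B A' B' : Type} [CommRing B] [CommRing A'] [CommRing B']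
    (f : B →+* B') (g : A' →+* B') : Subring (B × A') :=
  RingHom.eqLocus (f.comp (RingHom.fst B A')) (g.comp (RingHom.snd B A'))

/-- The first projection `pr₁ : B ×_{B'} A' →+* B`. -/
def fiberProdFst {B A' B' : Type} [CommRing B] [CommRing A'] [CommRing B']
    (f : B →+* B') (g : A' →+* B') : fiberProd f g →+* B :=
  (RingHom.fst B A').comp (fiberProd f g).subtype

/-- The second projection `pr₂ : B ×_{B'} A' →+* A'`. -/
def fiberProdSnd {B A' B' : Type} [CommRing B] [CommRing A'] [CommRing B']
    (f : B →+* B') (g : A' →+* B') : fiberProd f g →+* A' :=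
  (RingHom.snd B A').comp (fiberProd f g).subtype

theorem fiberProd_loc_aux {B A' B' : Type} [CommRing B] [CommRing A'] [CommRing B']
    (f : B →+* B') (g : A' →+* B') (b : B) (a' : A') (hba : f b = g a')
    (u : Localization.Away b →+* Localization.Away (f b))
    (v : Localization.Away a' →+* Localization.Away (f b))
    (key1 : ∀ x : B, u (algebraMap B (Localization.Away b) x)
      = algebraMap B' (Localization.Away (f b)) (f x))
    (key2 : ∀ y : A', v (algebraMap A' (Localization.Away a') y)
      = algebraMap B' (Localization.Away (f b)) (g y)) :
    ∃ e : Localization.Away (⟨(b, a'), hba⟩ : ↥(fiberProd f g)) ≃+* ↥(fiberProd u v),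
      ∀ x : ↥(fiberProd f g),
        ((e (algebraMap (↥(fiberProd f g))
              (Localization.Away (⟨(b, a'), hba⟩ : ↥(fiberProd f g))) x) :
            Localization.Away b × Localization.Away a')) =
          (algebraMap B (Localization.Away b) (x : B × A').1,
           algebraMap A' (Localization.Away a') (x : B × A').2) := by
  set a : ↥(fiberProd f g) := ⟨(b, a'), hba⟩ with ha
  set β := algebraMap B (Localization.Away b) with hβ
  set α := algebraMap A' (Localization.Away a') with hα
  set γ := algebraMap B' (Localization.Away (f b)) with hγ
  let φ : ↥(fiberProd f g) →+* ↥(fiberProd u v) :=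
    RingHom.codRestrict ((β.prodMap α).comp (fiberProd f g).subtype) (fiberProd u v)
      (fun x => by
        show u (β (x : B × A').1) = v (α (x : B × A').2)
        rw [key1, key2]
        exact congrArg γ x.2)
  letI : Algebra ↥(fiberProd f g) ↥(fiberProd u v) := φ.toAlgebra
  obtain ⟨w1, hw1⟩ := IsLocalization.map_units (Localization.Away b)
    (⟨b, Submonoid.mem_powers b⟩ : Submonoid.powers b)
  obtain ⟨w2, hw2⟩ := IsLocalization.map_units (Localization.Away a')
    (⟨a', Submonoid.mem_powers a'⟩ : Submonoid.powers a')
  have huv : u ↑w1 = v ↑w2 := by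
    rw [hw1, hw2]; show u (β b) = v (α a'); rw [key1, key2]; exact congrArg γ hba
  have hinvmem : ((↑w1⁻¹ : Localization.Away b), (↑w2⁻¹ : Localization.Away a'))
      ∈ fiberProd u v := by
    show u ↑w1⁻¹ = v ↑w2⁻¹
    have h2 : u ↑w1 * u ↑w1⁻¹ = 1 := by rw [← map_mul, Units.mul_inv, map_one]
    have h3 : v ↑w2 * v ↑w2⁻¹ = 1 := by rw [← map_mul, Units.mul_inv, map_one]
    calc u ↑w1⁻¹ = u ↑w1⁻¹ * (v ↑w2 * v ↑w2⁻¹) := by rw [h3, mul_one]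
      _ = (u ↑w1 * u ↑w1⁻¹) * v ↑w2⁻¹ := by rw [← huv]; ring
      _ = v ↑w2⁻¹ := by rw [h2, one_mul]
  have hunit : IsUnit (φ a) := by
    refine IsUnit.of_mul_eq_one ⟨_, hinvmem⟩ ?_
    apply Subtype.ext
    show (β b * ↑w1⁻¹, α a' * ↑w2⁻¹) = ((1 : Localization.Away b), (1 : Localization.Away a'))
    rw [← hw1, ← hw2, Units.mul_inv, Units.mul_inv]
  haveI hloc : IsLocalization (Submonoid.powers a) ↥(fiberProd u v) := by
    constructor
    constructor
    · rintro ⟨-, n, rfl⟩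
      show IsUnit (φ (a ^ n))
      rw [map_pow]
      exact hunit.pow n
    · rintro ⟨⟨x, y⟩, hxy⟩
      have hxy' : u x = v y := hxy
      obtain ⟨⟨b₀, s⟩, hs⟩ := IsLocalization.surj (M := Submonoid.powers b) x
      obtain ⟨n, hn⟩ := s.2
      rw [← hn] at hs
      obtain ⟨⟨a₀, t⟩, ht⟩ := IsLocalization.surj (M := Submonoid.powers a') y
      obtain ⟨m, hm⟩ := t.2
      rw [← hm] at ht
      have hsx : x * β (b ^ (n + m)) = β (b₀ * b ^ m) := by
        rw [pow_add, map_mul, map_mul, ← mul_assoc, hs]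
      have hty : y * α (a' ^ (n + m)) = α (a₀ * a' ^ n) := by
        rw [add_comm n m, pow_add, map_mul, map_mul, ← mul_assoc, ht]
      have hγeq : γ (f (b₀ * b ^ m)) = γ (g (a₀ * a' ^ n)) := by
        rw [← key1, ← key2, ← hsx, ← hty, map_mul, map_mul, hxy']
        congr 1
        rw [key1, key2]
        simp only [map_pow]
        exact congrArg (fun t => t ^ (n + m)) (congrArg γ hba)
      obtain ⟨c, hc⟩ := IsLocalization.exists_of_eq (M := Submonoid.powers (f b)) hγeq
      obtain ⟨k, hk⟩ := c.2
      rw [← hk] at hc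
      have hz : f (b ^ k * (b₀ * b ^ m)) = g (a' ^ k * (a₀ * a' ^ n)) := by
        simp only [map_mul, map_pow, ← hba] at hc ⊢
        exact hc
      refine ⟨⟨⟨(b ^ k * (b₀ * b ^ m), a' ^ k * (a₀ * a' ^ n)), hz⟩,
        ⟨a ^ (n + m + k), Submonoid.pow_mem _ (Submonoid.mem_powers a) _⟩⟩, ?_⟩
      apply Subtype.ext
      apply Prod.ext
      · show x * β (((a ^ (n + m + k) : ↥(fiberProd f g)) : B × A').1)
          = β (b ^ k * (b₀ * b ^ m))
        have : ((a ^ (n + m + k) : ↥(fiberProd f g)) : B × A').1 = b ^ (n + m + k) := by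
          rw [SubmonoidClass.coe_pow]; rfl
        rw [this, pow_add, map_mul, ← mul_assoc, hsx, ← map_mul, mul_comm]
      · show y * α (((a ^ (n + m + k) : ↥(fiberProd f g)) : B × A').2)
          = α (a' ^ k * (a₀ * a' ^ n))
        have : ((a ^ (n + m + k) : ↥(fiberProd f g)) : B × A').2 = a' ^ (n + m + k) := by
          rw [SubmonoidClass.coe_pow]; rfl
        rw [this, pow_add, map_mul, ← mul_assoc, hty, ← map_mul, mul_comm]
    · intro x y h
      have h1 : β (x : B × A').1 = β (y : B × A').1 :=
        congrArg (fun z : ↥(fiberProd u v) =>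
          (z : Localization.Away b × Localization.Away a').1) h
      have h2 : α (x : B × A').2 = α (y : B × A').2 :=
        congrArg (fun z : ↥(fiberProd u v) =>
          (z : Localization.Away b × Localization.Away a').2) h
      obtain ⟨c1, hc1⟩ := IsLocalization.exists_of_eq (M := Submonoid.powers b) h1
      obtain ⟨n, hn⟩ := c1.2
      rw [← hn] at hc1
      obtain ⟨c2, hc2⟩ := IsLocalization.exists_of_eq (M := Submonoid.powers a') h2
      obtain ⟨m, hm⟩ := c2.2
      rw [← hm] at hc2
      refine ⟨⟨a ^ (n + m), Submonoid.pow_mem _ (Submonoid.mem_powers a) _⟩, ?_⟩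
      apply Subtype.ext
      apply Prod.ext
      · show ((a ^ (n + m) : ↥(fiberProd f g)) : B × A').1 * (x : B × A').1
          = ((a ^ (n + m) : ↥(fiberProd f g)) : B × A').1 * (y : B × A').1
        have : ((a ^ (n + m) : ↥(fiberProd f g)) : B × A').1 = b ^ (n + m) := by
          rw [SubmonoidClass.coe_pow]; rfl
        rw [this, add_comm n m, pow_add, mul_assoc, mul_assoc, hc1]
      · show ((a ^ (n + m) : ↥(fiberProd f g)) : B × A').2 * (x : B × A').2
          = ((a ^ (n + m) : ↥(fiberProd f g)) : B × A').2 * (y : B × A').2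
        have : ((a ^ (n + m) : ↥(fiberProd f g)) : B × A').2 = a' ^ (n + m) := by
          rw [SubmonoidClass.coe_pow]; rfl
        rw [this, pow_add, mul_assoc, mul_assoc, hc2]
  refine ⟨(IsLocalization.algEquiv (Submonoid.powers a) (Localization.Away a)
    ↥(fiberProd u v)).toRingEquiv, fun x => ?_⟩
  have hE := (IsLocalization.algEquiv (Submonoid.powers a) (Localization.Away a)
    ↥(fiberProd u v)).commutes x
  dsimp only [AlgEquiv.toRingEquiv_eq_coe, AlgEquiv.coe_ringEquiv]
  rw [hE]
  rfl

theorem stmt6 {B A' B' : Type} [CommRing B] [CommRing A'] [CommRing B']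
    (f : B →+* B') (g : A' →+* B') (b : B) (a' : A') (hba : f b = g a') :
    letI a : ↥(fiberProd f g) := ⟨(b, a'), hba⟩;
    -- the induced map `B_b → B'_{b'}` on localizations away from `b` resp. `b' = f b`
    letI u : Localization.Away b →+* Localization.Away (f b) := Localization.awayMap f b;
    -- the induced map `A'_{a'} → B'_{b'}` on localizations away from `a'` resp. `b' = g a'`
    letI v : Localization.Away a' →+* Localization.Away (f b) :=
      letI : IsLocalization.Away (g a') (Localization.Away (f b)) := hba ▸ inferInstance;
      IsLocalization.Away.map (Localization.Away a') (Localization.Away (f b)) g a';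
    -- the natural map `A_a → B_b ×_{B'_{b'}} A'_{a'}` is an isomorphism
    ∃ e : Localization.Away a ≃+* ↥(fiberProd u v),
      ∀ x : ↥(fiberProd f g),
        ((e (algebraMap (↥(fiberProd f g)) (Localization.Away a) x) :
            Localization.Away b × Localization.Away a')) =
          (algebraMap B (Localization.Away b) (fiberProdFst f g x),
           algebraMap A' (Localization.Away a') (fiberProdSnd f g x)) := by
  letI : IsLocalization.Away (g a') (Localization.Away (f b)) := hba ▸ inferInstance
  exact fiberProd_loc_aux f g b a' hba _ _ (fun x => IsLocalization.map_eq _ x)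
    (fun y => IsLocalization.map_eq _ y)
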